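/- Let 0 < ε < 1/5 and let ξ ∈ ℝ^r be a nonzero entrywise nonnegative vector. Let q_k ∈ ℝ^r, k ∈ N, be a finite family of entrywise nonnegative vectors each satisfying q_kᵀξ ≥ (1−ε)·‖q_k‖₂·‖ξ‖₂. Then for any two subsets S, S' ⊆ N whose sums q_S := Σ_{k∈S} q_k and q_{S'} := Σ_{k∈S'} q_k are nonzero, one has q_Sᵀ q_{S'} ≥ (1−5ε)·‖q_S‖₂·‖q_{S'}‖₂. -/

import Mathlib

open RealInnerProductSpace

set_option maxHeartbeats 1000000 in
lemma angle_transfer {E : Type*} [NormedAddCommGroup E] [InnerProductSpace ℝ E]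
    (ξ u v : E) (hξ0 : ξ ≠ 0) (c : ℝ) (hc0 : 0 ≤ c) (hc1 : c ≤ 1)
    (hu : ⟪u, ξ⟫ ≥ c * ‖u‖ * ‖ξ‖) (hv : ⟪v, ξ⟫ ≥ c * ‖v‖ * ‖ξ‖) :
    ⟪u, v⟫ ≥ (2*c^2 - 1) * ‖u‖ * ‖v‖ := by
  have hξpos : (0:ℝ) < ‖ξ‖ := norm_pos_iff.mpr hξ0
  set e : E := ‖ξ‖⁻¹ • ξ with he
  have hne : ‖e‖ = 1 := norm_smul_inv_norm hξ0
  obtain ⟨a, ha⟩ : ∃ x : ℝ, ⟪u, e⟫ = x := ⟨_, rfl⟩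
  obtain ⟨b, hb⟩ : ∃ x : ℝ, ⟪v, e⟫ = x := ⟨_, rfl⟩
  have heu : ⟪e, u⟫ = a := by rw [real_inner_comm]; exact ha
  have hev : ⟪e, v⟫ = b := by rw [real_inner_comm]; exact hb
  have hae : a = ‖ξ‖⁻¹ * ⟪u, ξ⟫ := by rw [← ha, he, real_inner_smul_right]
  have hbe : b = ‖ξ‖⁻¹ * ⟪v, ξ⟫ := by rw [← hb, he, real_inner_smul_right]
  have hac : a ≥ c * ‖u‖ := by
    rw [hae, ge_iff_le, le_inv_mul_iff₀ hξpos]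
    calc ‖ξ‖ * (c * ‖u‖) = c * ‖u‖ * ‖ξ‖ := by ring
    _ ≤ ⟪u, ξ⟫ := hu
  have hbc : b ≥ c * ‖v‖ := by
    rw [hbe, ge_iff_le, le_inv_mul_iff₀ hξpos]
    calc ‖ξ‖ * (c * ‖v‖) = c * ‖v‖ * ‖ξ‖ := by ring
    _ ≤ ⟪v, ξ⟫ := hv
  have hee : ⟪e, e⟫ = 1 := by
    rw [real_inner_self_eq_norm_sq, hne]; norm_num
  have hinner : ⟪u - a • e, v - b • e⟫ = ⟪u, v⟫ - a * b := by
    simp only [inner_sub_left, inner_sub_right, real_inner_smul_left,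
      real_inner_smul_right, hee, ha, hb, heu, hev]
    ring
  have hnu : ‖u - a • e‖^2 = ‖u‖^2 - a^2 := by
    rw [norm_sub_sq_real, real_inner_smul_right, ha, norm_smul, hne, mul_one,
      Real.norm_eq_abs, sq_abs]
    ring
  have hnv : ‖v - b • e‖^2 = ‖v‖^2 - b^2 := by
    rw [norm_sub_sq_real, real_inner_smul_right, hb, norm_smul, hne, mul_one,
      Real.norm_eq_abs, sq_abs]
    ring
  have hcs : ⟪u - a • e, v - b • e⟫ ≥ -(‖u - a • e‖ * ‖v - b • e‖) := by
    have := abs_real_inner_le_norm (u - a • e) (v - b • e)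
    linarith [neg_abs_le (⟪u - a • e, v - b • e⟫ : ℝ)]
  have hunn : (0:ℝ) ≤ ‖u‖ := norm_nonneg _
  have hvnn : (0:ℝ) ≤ ‖v‖ := norm_nonneg _
  have hcu : 0 ≤ c * ‖u‖ := mul_nonneg hc0 hunn
  have hcv : 0 ≤ c * ‖v‖ := mul_nonneg hc0 hvnn
  have hab : a * b ≥ c^2 * (‖u‖ * ‖v‖) := by nlinarith
  have hnu' : ‖u - a • e‖^2 ≤ (1 - c^2) * ‖u‖^2 := by nlinarith
  have hnv' : ‖v - b • e‖^2 ≤ (1 - c^2) * ‖v‖^2 := by nlinarith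
  have hA : (0:ℝ) ≤ 1 - c^2 := by nlinarith
  have hpq : ‖u - a • e‖ * ‖v - b • e‖ ≤ (1 - c^2) * (‖u‖ * ‖v‖) := by
    have hsq : (‖u - a • e‖ * ‖v - b • e‖)^2 ≤ ((1 - c^2) * (‖u‖ * ‖v‖))^2 := by
      have h1 : ‖u - a • e‖^2 * ‖v - b • e‖^2 ≤
          ((1 - c^2) * ‖u‖^2) * ((1 - c^2) * ‖v‖^2) :=
        mul_le_mul hnu' hnv' (sq_nonneg _) (by positivity)
      calc (‖u - a • e‖ * ‖v - b • e‖)^2 = ‖u - a • e‖^2 * ‖v - b • e‖^2 := by ring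
      _ ≤ ((1 - c^2) * ‖u‖^2) * ((1 - c^2) * ‖v‖^2) := h1
      _ = ((1 - c^2) * (‖u‖ * ‖v‖))^2 := by ring
    have h2 := Real.sqrt_le_sqrt hsq
    rwa [Real.sqrt_sq (by positivity), Real.sqrt_sq (by positivity)] at h2
  nlinarith [hinner, hcs, hab, hpq]

/-- If each nonnegative vector `q k`, `k ∈ N`, makes a small angle with a fixed nonzero
nonnegative vector `ξ`, then for any two subsets `S, S' ⊆ N` whose sums are nonzero, the
sums `q_S` and `q_{S'}` satisfy `q_Sᵀ q_{S'} ≥ (1 - 5ε)‖q_S‖‖q_{S'}‖`. -/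
theorem subset_sums_small_mutual_angle {ι : Type*} (r : ℕ) (ε : ℝ)
    (hε0 : 0 < ε) (hε1 : ε < 1/5)
    (ξ : EuclideanSpace ℝ (Fin r)) (hξ0 : ξ ≠ 0) (hξ : ∀ i, 0 ≤ ξ i)
    (N : Finset ι) (q : ι → EuclideanSpace ℝ (Fin r))
    (hq : ∀ k ∈ N, ∀ i, 0 ≤ q k i)
    (hang : ∀ k ∈ N, ⟪q k, ξ⟫ ≥ (1 - ε) * ‖q k‖ * ‖ξ‖) :
    ∀ S S' : Finset ι, S ⊆ N → S' ⊆ N →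
      (∑ k ∈ S, q k) ≠ 0 → (∑ k ∈ S', q k) ≠ 0 →
      ⟪∑ k ∈ S, q k, ∑ k ∈ S', q k⟫ ≥
        (1 - 5*ε) * ‖∑ k ∈ S, q k‖ * ‖∑ k ∈ S', q k‖ := by
  intro S S' hS hS' hu0 hv0
  have hεle : (0:ℝ) ≤ 1 - ε := by linarith
  have key : ∀ T : Finset ι, T ⊆ N →
      ⟪∑ k ∈ T, q k, ξ⟫ ≥ (1 - ε) * ‖∑ k ∈ T, q k‖ * ‖ξ‖ := by
    intro T hT
    rw [sum_inner]
    have h1 : ∑ k ∈ T, ⟪q k, ξ⟫ ≥ ∑ k ∈ T, (1 - ε) * ‖q k‖ * ‖ξ‖ :=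
      Finset.sum_le_sum fun k hk => hang k (hT hk)
    have h2 : (1 - ε) * ‖∑ k ∈ T, q k‖ * ‖ξ‖ ≤ ∑ k ∈ T, (1 - ε) * ‖q k‖ * ‖ξ‖ := by
      have hts : ∑ k ∈ T, (1 - ε) * ‖q k‖ * ‖ξ‖ = (1 - ε) * (∑ k ∈ T, ‖q k‖) * ‖ξ‖ := by
        rw [Finset.mul_sum, Finset.sum_mul]
      rw [hts]
      have h3 := norm_sum_le T q
      have hξn : (0:ℝ) ≤ ‖ξ‖ := norm_nonneg _
      gcongr
    linarith
  have main := angle_transfer ξ (∑ k ∈ S, q k) (∑ k ∈ S', q k) hξ0 (1 - ε)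
    hεle (by linarith) (key S hS) (key S' hS')
  have hn1 : (0:ℝ) ≤ ‖∑ k ∈ S, q k‖ := norm_nonneg _
  have hn2 : (0:ℝ) ≤ ‖∑ k ∈ S', q k‖ := norm_nonneg _
  nlinarith [mul_nonneg (mul_nonneg hε0.le hn1) hn2,
    mul_nonneg (mul_nonneg (mul_pos hε0 hε0).le hn1) hn2]
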